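/- arXiv:2501.00847 — 3 statements merged into one kernel-verified Lean document; each statement's English description precedes it below -/
import Mathlib

section
/- Let L be a block-diagonal (n-2)×(n-2) real matrix consisting of q two-by-two blocks of the form [[s_ν, a_ν],[-a_ν, s_ν]] with s_ν = r/(r²+(a⁰_ν)²), a_ν = a⁰_ν/(r²+(a⁰_ν)²), followed by a diagonal block diag(1/r,…,1/r,0,…,0) with m-2q entries 1/r and n-2-m zeros, where r ≠ 0. Then L satisfies the optical constraint L Lᵀ = (tr(L Lᵀ)/((n-2)θ)) S, where S = (L+Lᵀ)/2 and θ = tr(S)/(n-2), provided θ ≠ 0. -/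
open Matrix

/-- The canonical block-diagonal optical matrix of size `N = n-2`:
`q` 2×2 blocks `[[s_ν, a_ν],[-a_ν, s_ν]]` with `s_ν = r/(r²+(a⁰_ν)²)`,
`a_ν = a⁰_ν/(r²+(a⁰_ν)²)`, followed by `m-2q` diagonal entries `1/r` and
`N-m` zeros. -/
noncomputable def canonicalL (N q m : ℕ) (r : ℝ) (a0 : ℕ → ℝ) :
    Matrix (Fin N) (Fin N) ℝ :=
  Matrix.of fun i j =>
    if i = j then
      (if i.val < 2 * q then r / (r ^ 2 + (a0 (i.val / 2)) ^ 2)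
       else if i.val < m then 1 / r else 0)
    else if i.val % 2 = 0 ∧ j.val = i.val + 1 ∧ j.val < 2 * q then
      a0 (i.val / 2) / (r ^ 2 + (a0 (i.val / 2)) ^ 2)
    else if j.val % 2 = 0 ∧ i.val = j.val + 1 ∧ i.val < 2 * q then
      -(a0 (j.val / 2) / (r ^ 2 + (a0 (j.val / 2)) ^ 2))
    else 0

section helpers

variable {N q m : ℕ} {r : ℝ} {a0 : ℕ → ℝ}

lemma cl_eq (i j : Fin N) : canonicalL N q m r a0 i j =
    if i = j then
      (if i.val < 2 * q then r / (r ^ 2 + (a0 (i.val / 2)) ^ 2)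
       else if i.val < m then 1 / r else 0)
    else if i.val % 2 = 0 ∧ j.val = i.val + 1 ∧ j.val < 2 * q then
      a0 (i.val / 2) / (r ^ 2 + (a0 (i.val / 2)) ^ 2)
    else if j.val % 2 = 0 ∧ i.val = j.val + 1 ∧ i.val < 2 * q then
      -(a0 (j.val / 2) / (r ^ 2 + (a0 (j.val / 2)) ^ 2))
    else 0 := rfl

lemma cl_zero {i j : Fin N} (h1 : i ≠ j)
    (h2 : ¬(i.val % 2 = 0 ∧ j.val = i.val + 1 ∧ j.val < 2 * q))
    (h3 : ¬(j.val % 2 = 0 ∧ i.val = j.val + 1 ∧ i.val < 2 * q)) :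
    canonicalL N q m r a0 i j = 0 := by
  rw [cl_eq, if_neg h1, if_neg h2, if_neg h3]

lemma alg1 (r a : ℝ) (hr : r ≠ 0) :
    r / (r ^ 2 + a ^ 2) * (r / (r ^ 2 + a ^ 2))
      + a / (r ^ 2 + a ^ 2) * (a / (r ^ 2 + a ^ 2))
      = 1 / r * (1 / 2 * (r / (r ^ 2 + a ^ 2) + r / (r ^ 2 + a ^ 2))) := by
  have hd : r ^ 2 + a ^ 2 ≠ 0 := by positivity
  field_simp
  norm_num

lemma key (hr : r ≠ 0) (hqm : 2 * q ≤ m) (hmN : m ≤ N) (i j : Fin N) :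
    (∑ k, canonicalL N q m r a0 i k * canonicalL N q m r a0 j k)
      = (1 / r) * ((1 / 2) *
          (canonicalL N q m r a0 i j + canonicalL N q m r a0 j i)) := by
  set L := canonicalL N q m r a0 with hLdef
  have hd : ∀ ν, r ^ 2 + (a0 ν) ^ 2 ≠ 0 := fun ν => by positivity
  by_cases hi2q : i.val < 2 * q
  · by_cases he : i.val % 2 = 0
    · -- even, partner i+1
      have hlt : i.val + 1 < 2 * q := by omega
      have hltN : i.val + 1 < N := by omega
      set i' : Fin N := ⟨i.val + 1, hltN⟩ with hi'def
      have hvi' : i'.val = i.val + 1 := rfl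
      have hii' : i ≠ i' := by
        intro h; apply_fun Fin.val at h; omega
      have hsupp : ∀ k : Fin N, k ≠ i → k ≠ i' → L i k = 0 := by
        intro k hk1 hk2
        refine cl_zero (fun h => hk1 h.symm) ?_ ?_
        · rintro ⟨_, h2, _⟩; exact hk2 (Fin.ext (by omega))
        · rintro ⟨hke, hik, _⟩; omega
      have hsum : (∑ k, L i k * L j k) = L i i * L j i + L i i' * L j i' := by
        rw [← Finset.sum_subset (Finset.subset_univ ({i, i'} : Finset (Fin N)))
          (fun x _ hx => by
            simp only [Finset.mem_insert, Finset.mem_singleton] at hx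
            push_neg at hx
            rw [hsupp x hx.1 hx.2, zero_mul]),
          Finset.sum_pair hii']
      rw [hsum]
      have e_ii : L i i = r / (r ^ 2 + (a0 (i.val / 2)) ^ 2) := by
        rw [hLdef, cl_eq, if_pos rfl, if_pos hi2q]
      have e_ii' : L i i' = a0 (i.val / 2) / (r ^ 2 + (a0 (i.val / 2)) ^ 2) := by
        rw [hLdef, cl_eq, if_neg hii', if_pos ⟨he, hvi', hlt⟩]
      by_cases hji : j = i
      · subst hji
        rw [e_ii, e_ii']
        exact alg1 r _ hr
      · by_cases hji' : j = i'
        · subst hji'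
          have e_i'i : L i' i = -(a0 (i.val / 2) / (r ^ 2 + (a0 (i.val / 2)) ^ 2)) := by
            rw [hLdef, cl_eq, if_neg (Ne.symm hii'), if_neg (by rintro ⟨h, _, _⟩; omega),
              if_pos ⟨he, hvi', by omega⟩]
          have hdiv : (i.val + 1) / 2 = i.val / 2 := by omega
          have e_i'i' : L i' i' = r / (r ^ 2 + (a0 (i.val / 2)) ^ 2) := by
            rw [hLdef, cl_eq, if_pos rfl, if_pos (by omega : i'.val < 2 * q), hvi', hdiv]
          rw [e_ii, e_ii', e_i'i, e_i'i']
          ring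
        · have z1 : L j i = 0 := by
            refine cl_zero hji ?_ ?_
            · rintro ⟨hje, hij, _⟩; omega
            · rintro ⟨_, hji2, h2q⟩; exact hji' (Fin.ext (by omega))
          have z2 : L j i' = 0 := by
            refine cl_zero hji' ?_ ?_
            · rintro ⟨hje, hij, _⟩; exact hji (Fin.ext (by omega))
            · rintro ⟨hpe, _, _⟩; omega
          have z3 : L i j = 0 := hsupp j hji hji'
          rw [z1, z2, z3]
          ring
    · -- odd, partner i-1
      have h1 : 1 ≤ i.val := by omega
      have hltN : i.val - 1 < N := by omega
      set i' : Fin N := ⟨i.val - 1, hltN⟩ with hi'def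
      have hvi' : i'.val = i.val - 1 := rfl
      have hplus : i.val = i'.val + 1 := by omega
      have hpe : i'.val % 2 = 0 := by omega
      have hii' : i ≠ i' := by intro h; apply_fun Fin.val at h; omega
      have hsupp : ∀ k : Fin N, k ≠ i → k ≠ i' → L i k = 0 := by
        intro k hk1 hk2
        refine cl_zero (fun h => hk1 h.symm) ?_ ?_
        · rintro ⟨hke, _, _⟩; omega
        · rintro ⟨_, hik, _⟩; exact hk2 (Fin.ext (by omega))
      have hsum : (∑ k, L i k * L j k) = L i i * L j i + L i i' * L j i' := by
        rw [← Finset.sum_subset (Finset.subset_univ ({i, i'} : Finset (Fin N)))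
          (fun x _ hx => by
            simp only [Finset.mem_insert, Finset.mem_singleton] at hx
            push_neg at hx
            rw [hsupp x hx.1 hx.2, zero_mul]),
          Finset.sum_pair hii']
      rw [hsum]
      have hdiv : i'.val / 2 = i.val / 2 := by omega
      have e_ii : L i i = r / (r ^ 2 + (a0 (i.val / 2)) ^ 2) := by
        rw [hLdef, cl_eq, if_pos rfl, if_pos hi2q]
      have e_ii' : L i i' = -(a0 (i.val / 2) / (r ^ 2 + (a0 (i.val / 2)) ^ 2)) := by
        rw [hLdef, cl_eq, if_neg hii', if_neg (by rintro ⟨h, _, _⟩; omega),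
          if_pos ⟨hpe, hplus, hi2q⟩, hdiv]
      by_cases hji : j = i
      · subst hji
        rw [e_ii, e_ii', neg_mul_neg]
        exact alg1 r _ hr
      · by_cases hji' : j = i'
        · subst hji'
          have e_i'i : L i' i = a0 (i.val / 2) / (r ^ 2 + (a0 (i.val / 2)) ^ 2) := by
            rw [hLdef, cl_eq, if_neg (Ne.symm hii'), if_pos ⟨hpe, hplus, hi2q⟩, hdiv]
          have e_i'i' : L i' i' = r / (r ^ 2 + (a0 (i.val / 2)) ^ 2) := by
            rw [hLdef, cl_eq, if_pos rfl, if_pos (by omega : i'.val < 2 * q), hdiv]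
          rw [e_ii, e_ii', e_i'i, e_i'i']
          ring
        · have z1 : L j i = 0 := by
            refine cl_zero hji ?_ ?_
            · rintro ⟨hje, hij, _⟩; exact hji' (Fin.ext (by omega))
            · rintro ⟨hpe2, _, _⟩; omega
          have z2 : L j i' = 0 := by
            refine cl_zero hji' ?_ ?_
            · rintro ⟨hje, hij, _⟩; omega
            · rintro ⟨_, hji2, _⟩; exact hji (Fin.ext (by omega))
          have z3 : L i j = 0 := hsupp j hji hji'
          rw [z1, z2, z3]
          ring
  · -- i ≥ 2q : support is {i}
    have hsupp : ∀ k : Fin N, k ≠ i → L i k = 0 := by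
      intro k hk
      refine cl_zero (fun h => hk h.symm) ?_ ?_
      · rintro ⟨_, _, h2q⟩; omega
      · rintro ⟨_, _, h2q⟩; omega
    have hsum : (∑ k, L i k * L j k) = L i i * L j i := by
      refine Finset.sum_eq_single_of_mem i (Finset.mem_univ i) ?_
      intro k _ hk
      rw [hsupp k hk, zero_mul]
    rw [hsum]
    by_cases hji : j = i
    · subst hji
      have e_jj : L j j = if j.val < m then 1 / r else 0 := by
        rw [hLdef, cl_eq, if_pos rfl, if_neg hi2q]
      rw [e_jj]
      split_ifs with hjm
      · field_simp; norm_num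
      · ring
    · have z1 : L j i = 0 := by
        refine cl_zero hji ?_ ?_
        · rintro ⟨_, _, h2q⟩; omega
        · rintro ⟨_, _, h2q⟩; omega
      have z3 : L i j = 0 := hsupp j hji
      rw [z1, z3]
      ring

end helpers

/-- The canonical optical matrix satisfies the optical constraint
`L Lᵀ = (tr(L Lᵀ)/((n-2)θ)) S`, `S = (L+Lᵀ)/2`, `θ = tr S/(n-2)`, when `θ ≠ 0`. -/
theorem stmt_8 (n q m : ℕ) (r : ℝ) (a0 : ℕ → ℝ) (hr : r ≠ 0)
    (hn : 2 ≤ n) (hq : 2 * q ≤ m) (hm : m ≤ n - 2)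
    (L S : Matrix (Fin (n - 2)) (Fin (n - 2)) ℝ) (θ : ℝ)
    (hL : L = canonicalL (n - 2) q m r a0)
    (hS : S = (1 / 2 : ℝ) • (L + Lᵀ))
    (hθ : θ = S.trace / ((n : ℝ) - 2))
    (hθ0 : θ ≠ 0) :
    L * Lᵀ = ((L * Lᵀ).trace / (((n : ℝ) - 2) * θ)) • S := by
  have hkey : L * Lᵀ = (1 / r) • S := by
    ext i j
    rw [Matrix.mul_apply]
    simp only [hS, Matrix.smul_apply, Matrix.add_apply, Matrix.transpose_apply,
      smul_eq_mul]
    rw [hL]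
    exact key hr hq hm i j
  have hn2 : ((n : ℝ) - 2) ≠ 0 := by
    intro h
    apply hθ0
    rw [hθ, h, div_zero]
  have hStr : S.trace = ((n : ℝ) - 2) * θ := by
    rw [hθ]; field_simp
  have htr : (L * Lᵀ).trace = (1 / r) * (((n : ℝ) - 2) * θ) := by
    rw [hkey, Matrix.trace_smul, smul_eq_mul, hStr]
  rw [htr, hkey]
  congr 1
  rw [mul_div_assoc]
  rw [div_self (mul_ne_zero hn2 hθ0), mul_one]
end

section
/- For the canonical optical matrix with q twisting blocks and parameters a⁰_{(2ν)}, the expansion is (n-2)θ = 2Σ_{ν=1}^q r/(r²+(a⁰_{(2ν)})²) + (m-2q)/r, the twist satisfies ω² = 2Σ_{ν=1}^q (a⁰_{(2ν)}/(r²+(a⁰_{(2ν)})²))², and if q = 0 and θ ≠ 0 then the shear σ² = 2Σ_ν(s_ν - θ)² + (m-2q)(1/r - θ)² + (n-2-m)θ² vanishes if and only if m = n-2 (equivalently θ = 1/r). -/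
open Matrix

private lemma sum_half (q : ℕ) (f : ℕ → ℝ) :
    ∑ i ∈ Finset.range (2 * q), f (i / 2) = 2 * ∑ ν ∈ Finset.range q, f ν := by
  induction q with
  | zero => simp
  | succ k ih =>
    have h : 2 * (k + 1) = (2 * k) + 1 + 1 := by ring
    rw [h, Finset.sum_range_succ, Finset.sum_range_succ, ih, Finset.sum_range_succ]
    have h1 : (2 * k) / 2 = k := by omega
    have h2 : (2 * k + 1) / 2 = k := by omega
    rw [h1, h2]; ring

private lemma sum_range_if (N k : ℕ) (h : k ≤ N) (f : ℕ → ℝ) :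
    ∑ i ∈ Finset.range N, (if i < k then f i else 0) = ∑ i ∈ Finset.range k, f i := by
  rw [Finset.range_eq_Ico, ← Finset.sum_Ico_consecutive _ (Nat.zero_le k) h,
    ← Finset.range_eq_Ico]
  have h2 : ∑ i ∈ Finset.Ico k N, (if i < k then f i else 0) = 0 :=
    Finset.sum_eq_zero fun i hi => by
      rw [Finset.mem_Ico] at hi; rw [if_neg (by omega)]
  rw [h2, add_zero]
  exact Finset.sum_congr rfl fun i hi => by
    rw [Finset.mem_range] at hi; rw [if_pos hi]

private lemma skew_entry (N q m : ℕ) (r : ℝ) (a0 : ℕ → ℝ) (i j : Fin N) :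
    ((1/2 : ℝ) • (canonicalL N q m r a0 - (canonicalL N q m r a0)ᵀ)) i j =
    if i.val % 2 = 0 ∧ j.val = i.val + 1 ∧ j.val < 2 * q then
      a0 (i.val / 2) / (r ^ 2 + (a0 (i.val / 2)) ^ 2)
    else if j.val % 2 = 0 ∧ i.val = j.val + 1 ∧ i.val < 2 * q then
      -(a0 (j.val / 2) / (r ^ 2 + (a0 (j.val / 2)) ^ 2))
    else 0 := by
  simp only [canonicalL, Matrix.smul_apply, Matrix.sub_apply, Matrix.transpose_apply,
    Matrix.of_apply, smul_eq_mul]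
  by_cases hij : i = j
  · subst hij
    rw [if_neg (show ¬(↑i % 2 = 0 ∧ (i:ℕ) = ↑i + 1 ∧ ↑i < 2 * q) by omega),
      if_neg (show ¬(↑i % 2 = 0 ∧ (i:ℕ) = ↑i + 1 ∧ ↑i < 2 * q) by omega)]
    ring
  · rw [if_neg hij, if_neg (Ne.symm hij)]
    split_ifs <;> first | (exfalso; omega) | ring1

/-- Optical scalars of the canonical optical matrix: the expansion is
`(n-2)θ = 2Σ_ν r/(r²+(a⁰_ν)²) + (m-2q)/r`, the twist satisfies
`ω² = 2Σ_ν (a⁰_ν/(r²+(a⁰_ν)²))²`, and for `q = 0` with `θ ≠ 0` the shear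
vanishes iff `m = n-2` iff `θ = 1/r`. -/
theorem stmt_9 (n q m : ℕ) (r : ℝ) (a0 : ℕ → ℝ) (hr : 0 < r)
    (hn : 2 ≤ n) (hq : 2 * q ≤ m) (hm : m ≤ n - 2)
    (L S A : Matrix (Fin (n - 2)) (Fin (n - 2)) ℝ) (θ σsq : ℝ)
    (hL : L = canonicalL (n - 2) q m r a0)
    (hS : S = (1 / 2 : ℝ) • (L + Lᵀ))
    (hA : A = (1 / 2 : ℝ) • (L - Lᵀ))
    (hθ : θ = S.trace / ((n : ℝ) - 2))
    (hσ : σsq = 2 * ∑ ν ∈ Finset.range q, (r / (r ^ 2 + (a0 ν) ^ 2) - θ) ^ 2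
        + ((m : ℝ) - 2 * q) * (1 / r - θ) ^ 2 + ((n : ℝ) - 2 - m) * θ ^ 2) :
    ((n : ℝ) - 2) * θ
        = 2 * ∑ ν ∈ Finset.range q, r / (r ^ 2 + (a0 ν) ^ 2) + ((m : ℝ) - 2 * q) / r
    ∧ (A * Aᵀ).trace = 2 * ∑ ν ∈ Finset.range q, (a0 ν / (r ^ 2 + (a0 ν) ^ 2)) ^ 2
    ∧ (q = 0 → θ ≠ 0 → ((σsq = 0 ↔ m = n - 2) ∧ (σsq = 0 ↔ θ = 1 / r))) := by
  have hr0 : r ≠ 0 := ne_of_gt hr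
  have hqN : 2 * q ≤ n - 2 := le_trans hq hm
  -- trace of S equals trace of L
  have htrS : S.trace = L.trace := by
    rw [hS]
    rw [Matrix.trace_smul, Matrix.trace_add, Matrix.trace_transpose, smul_eq_mul]
    ring
  -- trace of L
  have htrL : L.trace = 2 * ∑ ν ∈ Finset.range q, r / (r ^ 2 + (a0 ν) ^ 2)
      + ((m : ℝ) - 2 * q) / r := by
    rw [hL, Matrix.trace]
    have hdiag : ∀ i : Fin (n - 2), (canonicalL (n - 2) q m r a0).diag i =
        (fun k : ℕ => if k < 2 * q then r / (r ^ 2 + (a0 (k / 2)) ^ 2)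
          else if k < m then 1 / r else 0) i.val := by
      intro i; simp [canonicalL, Matrix.diag]
    rw [Finset.sum_congr rfl (fun i _ => hdiag i),
      Fin.sum_univ_eq_sum_range (fun k : ℕ => if k < 2 * q then r / (r ^ 2 + (a0 (k / 2)) ^ 2)
        else if k < m then 1 / r else 0) (n - 2)]
    rw [Finset.range_eq_Ico,
      ← Finset.sum_Ico_consecutive _ (Nat.zero_le m) hm,
      ← Finset.sum_Ico_consecutive _ (Nat.zero_le (2 * q)) hq,
      ← Finset.range_eq_Ico]
    have e1 : ∑ i ∈ Finset.range (2 * q),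
        (if i < 2 * q then r / (r ^ 2 + (a0 (i / 2)) ^ 2) else if i < m then 1 / r else 0)
        = 2 * ∑ ν ∈ Finset.range q, r / (r ^ 2 + (a0 ν) ^ 2) := by
      have hc : ∀ i ∈ Finset.range (2 * q),
          (if i < 2 * q then r / (r ^ 2 + (a0 (i / 2)) ^ 2) else if i < m then 1 / r else 0)
          = r / (r ^ 2 + (a0 (i / 2)) ^ 2) := fun i hi => by
        rw [Finset.mem_range] at hi; rw [if_pos hi]
      rw [Finset.sum_congr rfl hc]
      exact sum_half q (fun ν => r / (r ^ 2 + (a0 ν) ^ 2))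
    have e2 : ∑ i ∈ Finset.Ico (2 * q) m,
        (if i < 2 * q then r / (r ^ 2 + (a0 (i / 2)) ^ 2) else if i < m then 1 / r else 0)
        = ((m : ℝ) - 2 * q) / r := by
      have hc : ∀ i ∈ Finset.Ico (2 * q) m,
          (if i < 2 * q then r / (r ^ 2 + (a0 (i / 2)) ^ 2) else if i < m then 1 / r else 0)
          = 1 / r := fun i hi => by
        rw [Finset.mem_Ico] at hi; rw [if_neg (by omega), if_pos hi.2]
      rw [Finset.sum_congr rfl hc, Finset.sum_const, Nat.card_Ico, nsmul_eq_mul,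
        Nat.cast_sub hq]
      push_cast
      ring
    have e3 : ∑ i ∈ Finset.Ico m (n - 2),
        (if i < 2 * q then r / (r ^ 2 + (a0 (i / 2)) ^ 2) else if i < m then 1 / r else 0)
        = 0 :=
      Finset.sum_eq_zero fun i hi => by
        rw [Finset.mem_Ico] at hi
        rw [if_neg (by omega), if_neg (by omega)]
    rw [e1, e2, e3, add_zero]
  -- entries of A
  have hAe : ∀ i j : Fin (n - 2), A i j =
      if i.val % 2 = 0 ∧ j.val = i.val + 1 ∧ j.val < 2 * q then
        a0 (i.val / 2) / (r ^ 2 + (a0 (i.val / 2)) ^ 2)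
      else if j.val % 2 = 0 ∧ i.val = j.val + 1 ∧ i.val < 2 * q then
        -(a0 (j.val / 2) / (r ^ 2 + (a0 (j.val / 2)) ^ 2))
      else 0 := by
    intro i j
    rw [hA, hL]
    exact skew_entry (n - 2) q m r a0 i j
  -- part 2 : twist
  have htrA : (A * Aᵀ).trace = ∑ i : Fin (n - 2), ∑ j : Fin (n - 2), A i j * A i j := by
    simp [Matrix.trace, Matrix.diag, Matrix.mul_apply, Matrix.transpose_apply]
  have hinner : ∀ i : Fin (n - 2), (∑ j : Fin (n - 2), A i j * A i j) =
      (fun k : ℕ => if k < 2 * q then (a0 (k / 2) / (r ^ 2 + (a0 (k / 2)) ^ 2)) ^ 2 else 0)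
        i.val := by
    intro i
    by_cases hi : i.val < 2 * q
    · simp only [if_pos hi]
      by_cases he : i.val % 2 = 0
      · have hj : i.val + 1 < n - 2 := by omega
        have h0 : ∀ b : Fin (n - 2), b ≠ ⟨i.val + 1, hj⟩ → A i b * A i b = 0 := by
          intro b hb
          rw [hAe i b, if_neg (by rintro ⟨-, h2, -⟩; exact hb (Fin.ext h2)),
            if_neg (by rintro ⟨h1, h2, -⟩; omega)]
          simp
        rw [Fintype.sum_eq_single _ h0, hAe, if_pos ⟨he, rfl, show i.val + 1 < 2 * q by omega⟩]
        ring
      · have hj : i.val - 1 < n - 2 := by omega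
        have h0 : ∀ b : Fin (n - 2), b ≠ ⟨i.val - 1, hj⟩ → A i b * A i b = 0 := by
          intro b hb
          rw [hAe i b, if_neg (by rintro ⟨h1, -, -⟩; omega),
            if_neg (by rintro ⟨-, h2, -⟩; exact hb (Fin.ext (show b.val = i.val - 1 by omega)))]
          simp
        rw [Fintype.sum_eq_single _ h0, hAe,
          if_neg (by rintro ⟨h1, -, -⟩; omega),
          if_pos ⟨show (i.val - 1) % 2 = 0 by omega, show i.val = (i.val - 1) + 1 by omega,
            hi⟩]
        have hdiv : (i.val - 1) / 2 = i.val / 2 := by omega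
        show -(a0 ((i.val - 1) / 2) / (r ^ 2 + (a0 ((i.val - 1) / 2)) ^ 2))
            * -(a0 ((i.val - 1) / 2) / (r ^ 2 + (a0 ((i.val - 1) / 2)) ^ 2))
          = (a0 (i.val / 2) / (r ^ 2 + (a0 (i.val / 2)) ^ 2)) ^ 2
        rw [hdiv]
        ring
    · simp only [if_neg hi]
      exact Finset.sum_eq_zero fun j _ => by
        rw [hAe i j, if_neg (by rintro ⟨-, h2, h3⟩; omega),
          if_neg (by rintro ⟨-, h2, h3⟩; omega)]
        simp
  have part2 : (A * Aᵀ).trace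
      = 2 * ∑ ν ∈ Finset.range q, (a0 ν / (r ^ 2 + (a0 ν) ^ 2)) ^ 2 := by
    rw [htrA, Finset.sum_congr rfl (fun i _ => hinner i),
      Fin.sum_univ_eq_sum_range (fun k : ℕ =>
        if k < 2 * q then (a0 (k / 2) / (r ^ 2 + (a0 (k / 2)) ^ 2)) ^ 2 else 0) (n - 2),
      sum_range_if (n - 2) (2 * q) hqN _]
    exact sum_half q (fun ν => (a0 ν / (r ^ 2 + (a0 ν) ^ 2)) ^ 2)
  -- part 1 : expansion
  have part1 : ((n : ℝ) - 2) * θ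
      = 2 * ∑ ν ∈ Finset.range q, r / (r ^ 2 + (a0 ν) ^ 2) + ((m : ℝ) - 2 * q) / r := by
    by_cases hn2 : (n : ℝ) - 2 = 0
    · have hnn : (n : ℝ) = 2 := by linarith
      have hn' : n = 2 := by exact_mod_cast hnn
      have hm' : m = 0 := by omega
      have hq' : q = 0 := by omega
      rw [hn2, zero_mul, hq', hm']
      simp
    · rw [hθ, htrS, htrL, mul_comm, div_mul_cancel₀ _ hn2]
  refine ⟨part1, part2, ?_⟩
  -- part 3
  intro hq0 hθ0
  subst hq0
  have hn2 : (n : ℝ) - 2 ≠ 0 := by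
    intro h
    exact hθ0 (by rw [hθ, h, div_zero])
  have h1 : ((n : ℝ) - 2) * θ = (m : ℝ) / r := by
    rw [part1]; norm_num
  have hmR : (m : ℝ) ≤ (n : ℝ) - 2 := by
    have : ((m : ℕ) : ℝ) ≤ ((n - 2 : ℕ) : ℝ) := by exact_mod_cast hm
    rw [Nat.cast_sub hn] at this
    push_cast at this
    linarith
  have hσ' : σsq = (m : ℝ) * (1 / r - θ) ^ 2 + ((n : ℝ) - 2 - m) * θ ^ 2 := by
    rw [hσ]; norm_num
  have hθsq : 0 < θ ^ 2 := by positivity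
  have hMcast : m = n - 2 ↔ (m : ℝ) = (n : ℝ) - 2 := by
    constructor
    · intro h; subst h; rw [Nat.cast_sub hn]; push_cast; ring
    · intro h
      have : (m : ℝ) = ((n - 2 : ℕ) : ℝ) := by
        rw [Nat.cast_sub hn]; push_cast; linarith
      exact_mod_cast this
  have hCr : θ = 1 / r ↔ (m : ℝ) = (n : ℝ) - 2 := by
    constructor
    · intro h
      rw [h] at h1
      have hrr : ((n : ℝ) - 2) * (1 / r) * r = (m : ℝ) / r * r := by rw [h1]
      field_simp at hrr
      linarith
    · intro h
      apply mul_left_cancel₀ hn2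
      rw [h1, ← h]
      ring
  have hσiff : σsq = 0 ↔ (m : ℝ) = (n : ℝ) - 2 := by
    constructor
    · intro h0
      rw [hσ'] at h0
      have ht1 : 0 ≤ (m : ℝ) * (1 / r - θ) ^ 2 := by positivity
      have ht2 : ((n : ℝ) - 2 - m) * θ ^ 2 ≤ 0 := by linarith
      have : (n : ℝ) - 2 - m ≤ 0 := by nlinarith
      linarith
    · intro h
      have hθr : θ = 1 / r := hCr.mpr h
      rw [hσ', hθr]
      have : (n : ℝ) - 2 - m = 0 := by linarith
      rw [this]
      ring
  exact ⟨hσiff.trans hMcast.symm, hσiff.trans hCr.symm⟩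
end

section
/- With the canonical optical matrix having q ≠ 0 twisting blocks and r ≠ 0, the shear σ vanishes if and only if m = 2q = n-2 and all spin functions squared are equal: (a⁰_{(2)})² = (a⁰_{(4)})² = … = (a⁰_{(2q)})². In particular, a shearfree twisting expanding optical matrix of this form exists only in even spacetime dimensions. -/
set_option maxHeartbeats 1000000 in
/-- For the canonical optical matrix with `q ≠ 0` twisting blocks (all
`a⁰_ν ≠ 0`) and `r ≠ 0`, the shear vanishes iff `m = 2q = n-2` and all spin
functions squared are equal; in particular this requires `n` even. -/
theorem stmt_10 (n q m : ℕ) (r : ℝ) (a0 : ℕ → ℝ) (hr : r ≠ 0)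
    (hq0 : q ≠ 0) (ha : ∀ ν < q, a0 ν ≠ 0)
    (hn : 2 ≤ n) (hq : 2 * q ≤ m) (hm : m ≤ n - 2)
    (θ σsq : ℝ)
    (hθ : ((n : ℝ) - 2) * θ
        = 2 * ∑ ν ∈ Finset.range q, r / (r ^ 2 + (a0 ν) ^ 2) + ((m : ℝ) - 2 * q) / r)
    (hσ : σsq = 2 * ∑ ν ∈ Finset.range q, (r / (r ^ 2 + (a0 ν) ^ 2) - θ) ^ 2
        + ((m : ℝ) - 2 * q) * (1 / r - θ) ^ 2 + ((n : ℝ) - 2 - m) * θ ^ 2) :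
    (σsq = 0 ↔ (m = 2 * q ∧ 2 * q = n - 2 ∧
        ∀ ν₁ < q, ∀ ν₂ < q, (a0 ν₁) ^ 2 = (a0 ν₂) ^ 2))
    ∧ (σsq = 0 → Even n) := by
  have hrr : ∀ ν : ℕ, (0:ℝ) < r ^ 2 + (a0 ν) ^ 2 := fun ν => by positivity
  have hsne : ∀ ν : ℕ, r / (r ^ 2 + (a0 ν) ^ 2) ≠ 0 :=
    fun ν => div_ne_zero hr (hrr ν).ne'
  have hm2q : (2 * q : ℝ) ≤ (m : ℝ) := by exact_mod_cast hq
  have hmn : (m : ℝ) ≤ (n : ℝ) - 2 := by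
    have h1 : (m : ℝ) ≤ ((n - 2 : ℕ) : ℝ) := Nat.cast_le.mpr hm
    rwa [Nat.cast_sub hn] at h1
  have hqpos : 0 < q := Nat.pos_of_ne_zero hq0
  -- main equivalence
  have main : σsq = 0 ↔ (m = 2 * q ∧ 2 * q = n - 2 ∧
      ∀ ν₁ < q, ∀ ν₂ < q, (a0 ν₁) ^ 2 = (a0 ν₂) ^ 2) := by
    constructor
    · intro h0
      have hS : (0:ℝ) ≤ ∑ ν ∈ Finset.range q, (r / (r ^ 2 + (a0 ν) ^ 2) - θ) ^ 2 :=
        Finset.sum_nonneg fun _ _ => sq_nonneg _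
      have hA : (0:ℝ) ≤ ((m : ℝ) - 2 * q) * (1 / r - θ) ^ 2 :=
        mul_nonneg (by linarith) (sq_nonneg _)
      have hB : (0:ℝ) ≤ ((n : ℝ) - 2 - m) * θ ^ 2 :=
        mul_nonneg (by linarith) (sq_nonneg _)
      rw [hσ] at h0
      have hS0 : ∑ ν ∈ Finset.range q, (r / (r ^ 2 + (a0 ν) ^ 2) - θ) ^ 2 = 0 := by
        linarith
      have hA0 : ((m : ℝ) - 2 * q) * (1 / r - θ) ^ 2 = 0 := by linarith
      have hB0 : ((n : ℝ) - 2 - m) * θ ^ 2 = 0 := by linarith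
      have hsθ : ∀ ν < q, r / (r ^ 2 + (a0 ν) ^ 2) = θ := by
        intro ν hν
        have := (Finset.sum_eq_zero_iff_of_nonneg (fun i _ => sq_nonneg _)).mp hS0
          ν (Finset.mem_range.mpr hν)
        have := sq_eq_zero_iff.mp this
        linarith
      have hθ0 : θ ≠ 0 := by
        rw [← hsθ 0 hqpos]; exact hsne 0
      -- m = n - 2
      have hmn2 : m = n - 2 := by
        rcases mul_eq_zero.mp hB0 with h | h
        · have : (m : ℝ) + 2 = (n : ℝ) := by linarith
          have : m + 2 = n := by exact_mod_cast this
          omega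
        · exact absurd (pow_eq_zero_iff two_ne_zero |>.mp h) hθ0
      -- m = 2q
      have hm2 : m = 2 * q := by
        rcases mul_eq_zero.mp hA0 with h | h
        · have : (m : ℝ) = 2 * q := by linarith
          exact_mod_cast this
        · exfalso
          have h1 : 1 / r = θ := by
            have := sq_eq_zero_iff.mp h; linarith
          have h2 : 1 / r = r / (r ^ 2 + (a0 0) ^ 2) := by
            rw [h1, ← hsθ 0 hqpos]
          have h3 : r ^ 2 + (a0 0) ^ 2 = r * r := by
            field_simp at h2
            linarith [h2]
          have : a0 0 = 0 := by nlinarith [sq_nonneg (a0 0)]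
          exact ha 0 hqpos this
      refine ⟨hm2, by omega, ?_⟩
      intro ν₁ h₁ ν₂ h₂
      have e1 := hsθ ν₁ h₁
      have e2 := hsθ ν₂ h₂
      have e3 : r / (r ^ 2 + (a0 ν₁) ^ 2) = r / (r ^ 2 + (a0 ν₂) ^ 2) := by
        rw [e1, e2]
      rw [div_eq_div_iff (hrr ν₁).ne' (hrr ν₂).ne'] at e3
      have : r * (r ^ 2 + (a0 ν₂) ^ 2) = r * (r ^ 2 + (a0 ν₁) ^ 2) := by linarith
      have := mul_left_cancel₀ hr this
      linarith
    · rintro ⟨h1, h2, h3⟩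
      have hc1 : (m : ℝ) - 2 * q = 0 := by
        have : (m : ℝ) = 2 * q := by exact_mod_cast h1
        linarith
      have hc2 : (n : ℝ) - 2 - m = 0 := by
        have : m + 2 = n := by omega
        have : (m : ℝ) + 2 = n := by exact_mod_cast this
        linarith
      have hsame : ∀ ν < q, r / (r ^ 2 + (a0 ν) ^ 2) = r / (r ^ 2 + (a0 0) ^ 2) := by
        intro ν hν
        rw [h3 ν hν 0 hqpos]
      have hsum : ∑ ν ∈ Finset.range q, r / (r ^ 2 + (a0 ν) ^ 2)
          = q * (r / (r ^ 2 + (a0 0) ^ 2)) := by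
        rw [Finset.sum_congr rfl fun ν hν => hsame ν (Finset.mem_range.mp hν)]
        rw [Finset.sum_const, Finset.card_range, nsmul_eq_mul]
      have hθval : θ = r / (r ^ 2 + (a0 0) ^ 2) := by
        have hn2 : (n : ℝ) - 2 = 2 * q := by linarith
        rw [hsum, hc1, hn2, zero_div] at hθ
        have hq' : (2 * (q:ℝ)) ≠ 0 := by
          have : (0:ℝ) < q := by exact_mod_cast hqpos
          positivity
        have h5 : (2 * (q:ℝ)) * θ = (2 * (q:ℝ)) * (r / (r ^ 2 + (a0 0) ^ 2)) := by
          rw [hθ]; ring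
        exact mul_left_cancel₀ hq' h5
      have hsumsq : ∑ ν ∈ Finset.range q, (r / (r ^ 2 + (a0 ν) ^ 2) - θ) ^ 2 = 0 :=
        Finset.sum_eq_zero fun ν hν => by
          rw [hsame ν (Finset.mem_range.mp hν), ← hθval, sub_self]
          simp
      rw [hσ, hsumsq, hc1, hc2]; ring
  refine ⟨main, fun h0 => ?_⟩
  obtain ⟨h1, h2, -⟩ := main.mp h0
  exact ⟨q + 1, by omega⟩
end
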